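/- arXiv:1304.4534 — 3 statements merged into one kernel-verified Lean document; each statement's English description precedes it below -/
import Mathlib

section
/- For any T ∈ [0,∞), any sequence of natural numbers (k(n))_{n≥1} with k(n)/n → T as n → ∞, and every x ∈ ℝ: lim_{n→∞} | V̂^{(n)}_{k(n)}(x) − V^{(n)}_{k(n)}(x) | = 0. -/
open MeasureTheory ProbabilityTheory Filter
open scoped ENNReal

section Setup

variable {Ω : Type*}

/-- `X` has stationary increments (for `s, t ≥ 0`). -/
def StationaryIncrements [MeasurableSpace Ω] (P : Measure Ω) (X : ℝ → Ω → ℝ) : Prop :=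
  ∀ s t : ℝ, 0 ≤ s → 0 ≤ t →
    Measure.map (fun ω => X (t + s) ω - X t ω) P = Measure.map (X s) P

/-- `X` has independent increments: for `0 = t 0 ≤ t 1 ≤ ⋯ ≤ t m` the increments
`X (t (j+1)) − X (t j)` are independent. -/
def IndependentIncrements [MeasurableSpace Ω] (P : Measure Ω) (X : ℝ → Ω → ℝ) : Prop :=
  ∀ (m : ℕ) (t : Fin (m + 1) → ℝ), (∀ i, 0 ≤ t i) → Monotone t → t 0 = 0 →
    iIndepFun
      (fun j : Fin m => fun ω => X (t j.succ) ω - X (t j.castSucc) ω) P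

/-- The paths `t ↦ X t ω` are almost surely right-continuous with left limits on `[0,∞)`. -/
def CadlagPaths [MeasurableSpace Ω] (P : Measure Ω) (X : ℝ → Ω → ℝ) : Prop :=
  ∀ᵐ ω ∂P,
    (∀ t : ℝ, 0 ≤ t → ContinuousWithinAt (fun s => X s ω) (Set.Ici t) t) ∧
      ∀ t : ℝ, 0 < t → ∃ l : ℝ,
        Tendsto (fun s => X s ω) (nhdsWithin t (Set.Iio t)) (nhds l)

/-- `X` is a Lévy process (indexed by `[0,∞)`, extended to `ℝ` for convenience):
measurable marginals, `X 0 = 0` a.s., stationary independent increments and a.s.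
càdlàg paths. -/
def IsLevy [MeasurableSpace Ω] (P : Measure Ω) (X : ℝ → Ω → ℝ) : Prop :=
  (∀ t, Measurable (X t)) ∧ (∀ᵐ ω ∂P, X 0 ω = 0) ∧
    StationaryIncrements P X ∧ IndependentIncrements P X ∧ CadlagPaths P X

/-- `ξ` is an i.i.d. sequence of exponential random variables with rate `ρ`. -/
def IsExpSeq [MeasurableSpace Ω] (P : Measure Ω) (ρ : ℝ) (ξ : ℕ → Ω → ℝ) : Prop :=
  (∀ i, Measurable (ξ i)) ∧
    iIndepFun ξ P ∧
    ∀ i, Measure.map (ξ i) P = expMeasure ρ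

/-- The sequence `ξ` is independent of the process `X`. -/
def IndepOfProcess [MeasurableSpace Ω] (P : Measure Ω) (ξ : ℕ → Ω → ℝ)
    (X : ℝ → Ω → ℝ) : Prop :=
  Indep (⨆ i : ℕ, MeasurableSpace.comap (ξ i) inferInstance)
    (⨆ t : ℝ, MeasurableSpace.comap (X t) inferInstance) P

/-- `T^{(n)}_k = ξ_1 + ⋯ + ξ_k`, the `k`-th grid point. -/
def gridTime (ξ : ℕ → Ω → ℝ) (k : ℕ) (ω : Ω) : ℝ :=
  ∑ i ∈ Finset.range k, ξ i ω

/-- The counting process `N_t = max {k : T_k ≤ t}` associated to the grid. -/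
noncomputable def countProc (ξ : ℕ → Ω → ℝ) (t : ℝ) (ω : Ω) : ℕ :=
  sSup {k : ℕ | gridTime ξ k ω ≤ t}

/-- The natural filtration generated by the process `X` on `[0,∞)`. -/
def natFiltration (X : ℝ → Ω → ℝ) (t : ℝ) : MeasurableSpace Ω :=
  ⨆ s ∈ Set.Icc (0 : ℝ) t, MeasurableSpace.comap (X s) inferInstance

/-- The filtration generated by the pair `(X, N)` on `[0,∞)`. -/
def pairFiltration (X : ℝ → Ω → ℝ) (N : ℝ → Ω → ℕ) (t : ℝ) : MeasurableSpace Ω :=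
  ⨆ s ∈ Set.Icc (0 : ℝ) t,
    (MeasurableSpace.comap (X s) inferInstance ⊔ MeasurableSpace.comap (N s) inferInstance)

/-- `τ` is a stopping time of the family of σ-algebras `𝔽`. -/
def IsStoppingTimeWRT (𝔽 : ℝ → MeasurableSpace Ω) (τ : Ω → ℝ) : Prop :=
  ∀ t : ℝ, MeasurableSet[𝔽 t] {ω | τ ω ≤ t}

/-- The set `𝒯̃^{(n)}` of stopping times of the filtration generated by `(X, N^{(n)})`
taking values on the grid points `{T^{(n)}_0, T^{(n)}_1, …}`. -/
def gridStoppingTimes (X : ℝ → Ω → ℝ) (ξ : ℕ → Ω → ℝ) : Set (Ω → ℝ) :=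
  {τ | IsStoppingTimeWRT (pairFiltration X (countProc ξ)) τ ∧
        ∀ ω, ∃ k : ℕ, τ ω = gridTime ξ k ω}

/-- The set of (nonnegative, finite-valued) stopping times of the filtration generated
by `X`. -/
def stoppingTimes (X : ℝ → Ω → ℝ) : Set (Ω → ℝ) :=
  {τ | (∀ ω, 0 ≤ τ ω) ∧ IsStoppingTimeWRT (natFiltration X) τ}

/-- The adjusted discount factor `D^{(n)}(τ) = ∑_{i≥0} 1_{τ = T^{(n)}_i} e^{−r i/n}`. -/
noncomputable def discount (r : ℝ) (n : ℕ) (ξ : ℕ → Ω → ℝ) (τ : Ω → ℝ) (ω : Ω) : ℝ :=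
  ∑' i : ℕ, Set.indicator {ω' | τ ω' = gridTime ξ i ω'}
      (fun _ => Real.exp (-(r * i / n))) ω

/-- The value function `V^{(n)}_k(x)` of the adjusted (Canadised) problem, with the
adjusted discount factor `D^{(n)}`. -/
noncomputable def V [MeasurableSpace Ω] (P : Measure Ω) (X : ℝ → Ω → ℝ)
    (ξ : ℕ → Ω → ℝ) (f : ℝ → ℝ) (r : ℝ) (n : ℕ) (k : ℕ) (x : ℝ) : ℝ :=
  sSup ((fun τ : Ω → ℝ =>
      ∫ ω, discount r n ξ (fun ω' => min (τ ω') (gridTime ξ k ω')) ω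
          * f (x + X (min (τ ω) (gridTime ξ k ω)) ω) ∂P) '' gridStoppingTimes X ξ)

/-- The value function `V̂^{(n)}_k(x)`, with the genuine discount factor `e^{−rt}`. -/
noncomputable def Vhat [MeasurableSpace Ω] (P : Measure Ω) (X : ℝ → Ω → ℝ)
    (ξ : ℕ → Ω → ℝ) (f : ℝ → ℝ) (r : ℝ) (k : ℕ) (x : ℝ) : ℝ :=
  sSup ((fun τ : Ω → ℝ =>
      ∫ ω, Real.exp (-(r * min (τ ω) (gridTime ξ k ω)))
          * f (x + X (min (τ ω) (gridTime ξ k ω)) ω) ∂P) '' gridStoppingTimes X ξ)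

/-- `v(T,x) = sup_τ E_x[e^{−r(τ∧T)} f(X_{τ∧T})]`, the supremum over all stopping times
of the filtration generated by `X`. -/
noncomputable def valueFun [MeasurableSpace Ω] (P : Measure Ω) (X : ℝ → Ω → ℝ)
    (f : ℝ → ℝ) (r : ℝ) (T : ℝ) (x : ℝ) : ℝ :=
  sSup ((fun τ : Ω → ℝ =>
      ∫ ω, Real.exp (-(r * min (τ ω) T)) * f (x + X (min (τ ω) T) ω) ∂P)
    '' stoppingTimes X)

end Setup

section MomentLemmas

open Real Set

lemma expPDF_eq (ρ : ℝ) (x : ℝ) :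
    gammaPDFReal 1 ρ x = if 0 ≤ x then ρ * Real.exp (-(ρ * x)) else 0 := by
  unfold gammaPDFReal
  split_ifs with h
  · rw [Real.rpow_one, Real.Gamma_one, sub_self, Real.rpow_zero]; ring
  · rfl

lemma expMeasure_eq_withDensity (ρ : ℝ) :
    expMeasure ρ = MeasureTheory.volume.withDensity
      (fun x => ((gammaPDFReal 1 ρ x).toNNReal : ℝ≥0∞)) := rfl

lemma integral_expMeasure (ρ : ℝ) (hρ : 0 < ρ) (g : ℝ → ℝ) :
    ∫ x, g x ∂(expMeasure ρ)
      = ∫ x, Set.indicator (Ici 0) (fun x => ρ * Real.exp (-(ρ * x)) * g x) x := by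
  rw [expMeasure_eq_withDensity ρ,
    integral_withDensity_eq_integral_smul ((measurable_gammaPDFReal 1 ρ).real_toNNReal) g]
  congr 1
  ext x
  rw [NNReal.smul_def, Real.coe_toNNReal _ (gammaPDFReal_nonneg zero_lt_one hρ x)]
  rw [expPDF_eq ρ]
  by_cases h : 0 ≤ x
  · rw [if_pos h, Set.indicator_of_mem (Set.mem_Ici.mpr h)]; simp [smul_eq_mul]
  · rw [if_neg h, Set.indicator_of_notMem (by simpa using h), zero_smul]

lemma integral_pow_expMeasure (ρ : ℝ) (hρ : 0 < ρ) (p : ℕ) :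
    ∫ x, x ^ p ∂(expMeasure ρ) = (Nat.factorial p : ℝ) / ρ ^ p := by
  rw [integral_expMeasure ρ hρ, integral_indicator measurableSet_Ici,
    integral_Ici_eq_integral_Ioi]
  have : ∀ x ∈ Ioi (0:ℝ), ρ * Real.exp (-(ρ * x)) * x ^ p
      = ρ * (x ^ ((p:ℝ) + 1 - 1) * Real.exp (-(ρ * x))) := by
    intro x hx
    rw [add_sub_cancel_right, Real.rpow_natCast]; ring
  rw [setIntegral_congr_fun measurableSet_Ioi this, integral_const_mul,
    integral_rpow_mul_exp_neg_mul_Ioi (by positivity) hρ]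
  rw [show (p:ℝ) + 1 = ((p+1 : ℕ) : ℝ) by push_cast; ring, Real.rpow_natCast,
    show ((p+1:ℕ):ℝ) = (p:ℝ) + 1 by push_cast; ring, Real.Gamma_nat_eq_factorial]
  rw [one_div, inv_pow]
  field_simp
  ring

lemma integrable_pow_expMeasure (ρ : ℝ) (hρ : 0 < ρ) (p : ℕ) :
    MeasureTheory.Integrable (fun x => x ^ p) (expMeasure ρ) := by
  rw [expMeasure_eq_withDensity ρ,
    integrable_withDensity_iff_integrable_smul ((measurable_gammaPDFReal 1 ρ).real_toNNReal)]
  have heq : (fun x : ℝ => (gammaPDFReal 1 ρ x).toNNReal • x ^ p)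
      = Set.indicator (Ici (0:ℝ)) (fun x => ρ * Real.exp (-(ρ * x)) * x ^ p) := by
    ext x
    rw [NNReal.smul_def, Real.coe_toNNReal _ (gammaPDFReal_nonneg zero_lt_one hρ x),
      expPDF_eq ρ, smul_eq_mul]
    by_cases h : 0 ≤ x
    · rw [if_pos h, Set.indicator_of_mem (Set.mem_Ici.mpr h)]
    · rw [if_neg h, Set.indicator_of_notMem (by simpa using h), zero_mul]
  rw [heq, integrable_indicator_iff measurableSet_Ici, IntegrableOn,
    Measure.restrict_congr_set Ioi_ae_eq_Ici.symm]
  have h2 : ∀ x ∈ Ioi (0:ℝ), x ^ ((p:ℝ)) * Real.exp (-ρ * x ^ ((1:ℝ)))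
      = ρ⁻¹ * (ρ * Real.exp (-(ρ * x)) * x ^ p) := by
    intro x hx
    rw [Real.rpow_natCast, Real.rpow_one]
    field_simp
  have := (integrableOn_rpow_mul_exp_neg_mul_rpow
    (lt_of_lt_of_le neg_one_lt_zero (Nat.cast_nonneg p)) zero_lt_one hρ).congr_fun h2 measurableSet_Ioi
  have h3 : IntegrableOn (fun x => ρ * (ρ⁻¹ * (ρ * Real.exp (-(ρ * x)) * x ^ p))) (Ioi 0)
      MeasureTheory.volume := this.const_mul ρ
  apply h3.congr_fun _ measurableSet_Ioi
  intro x hx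
  field_simp

end MomentLemmas

section OmegaLemmas

variable {Ω : Type*} [MeasurableSpace Ω] {P : Measure Ω} [IsProbabilityMeasure P]
variable {ρ : ℝ} {ξ : ℕ → Ω → ℝ}

lemma xi_memLp2 (hξ : IsExpSeq P ρ ξ) (hρ : 0 < ρ) (i : ℕ) : MemLp (ξ i) 2 P := by
  have h0 : MemLp (id : ℝ → ℝ) 2 (expMeasure ρ) := by
    rw [memLp_two_iff_integrable_sq aestronglyMeasurable_id]
    have := integrable_pow_expMeasure ρ hρ 2
    apply this.congr
    filter_upwards with x
    simp
  have h1 : MemLp (id : ℝ → ℝ) 2 (Measure.map (ξ i) P) := by rw [hξ.2.2 i]; exact h0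
  exact (memLp_map_measure_iff aestronglyMeasurable_id (hξ.1 i).aemeasurable).mp h1

lemma xi_integral (hξ : IsExpSeq P ρ ξ) (hρ : 0 < ρ) (i : ℕ) : ∫ ω, ξ i ω ∂P = 1 / ρ := by
  have h1 : ∫ ω, ξ i ω ∂P = ∫ x, x ∂(Measure.map (ξ i) P) :=
    (integral_map (hξ.1 i).aemeasurable aestronglyMeasurable_id).symm
  rw [h1, hξ.2.2 i]
  have := integral_pow_expMeasure ρ hρ 1
  simpa using this

lemma xi_integral_sq (hξ : IsExpSeq P ρ ξ) (hρ : 0 < ρ) (i : ℕ) :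
    ∫ ω, (ξ i ω) ^ 2 ∂P = 2 / ρ ^ 2 := by
  have h1 : ∫ ω, (ξ i ω) ^ 2 ∂P = ∫ x, x ^ 2 ∂(Measure.map (ξ i) P) :=
    (integral_map (hξ.1 i).aemeasurable
      (measurable_id.pow_const 2).aestronglyMeasurable).symm
  rw [h1, hξ.2.2 i, integral_pow_expMeasure ρ hρ 2]
  norm_num [Nat.factorial]

lemma xi_variance (hξ : IsExpSeq P ρ ξ) (hρ : 0 < ρ) (i : ℕ) :
    variance (ξ i) P = 1 / ρ ^ 2 := by
  rw [variance_eq_sub (xi_memLp2 hξ hρ i)]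
  have h2 : P[(ξ i) ^ 2] = 2 / ρ ^ 2 := by
    rw [← xi_integral_sq hξ hρ i]; congr 1
  have h1 : P[ξ i] = 1 / ρ := xi_integral hξ hρ i
  rw [h2, h1]
  field_simp
  ring

lemma xi_pos_ae (hξ : IsExpSeq P ρ ξ) (hρ : 0 < ρ) : ∀ᵐ ω ∂P, ∀ i, 0 < ξ i ω := by
  rw [MeasureTheory.ae_all_iff]
  intro i
  have hnull : P {ω | ξ i ω ≤ 0} = 0 := by
    have h1 : {ω | ξ i ω ≤ 0} = ξ i ⁻¹' (Set.Iic 0) := rfl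
    rw [h1, ← Measure.map_apply (hξ.1 i) measurableSet_Iic, hξ.2.2 i]
    show expMeasure ρ (Set.Iic 0) = 0
    rw [show expMeasure ρ = gammaMeasure 1 ρ from rfl, gammaMeasure,
      MeasureTheory.withDensity_apply _ measurableSet_Iic,
      MeasureTheory.setLIntegral_congr (Filter.EventuallyEq.symm Iio_ae_eq_Iic)]
    exact lintegral_gammaPDF_of_nonpos le_rfl
  rw [MeasureTheory.ae_iff]
  convert hnull using 2
  ext ω
  simp [not_lt]

lemma gridTime_eq_sum (j : ℕ) : gridTime ξ j = ∑ i ∈ Finset.range j, ξ i := by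
  ext ω; simp [gridTime]

lemma gridTime_memLp2 (hξ : IsExpSeq P ρ ξ) (hρ : 0 < ρ) (j : ℕ) :
    MemLp (gridTime ξ j) 2 P := by
  rw [gridTime_eq_sum]
  exact memLp_finsetSum' _ (fun i _ => xi_memLp2 hξ hρ i)

lemma gridTime_integral (hξ : IsExpSeq P ρ ξ) (hρ : 0 < ρ) (j : ℕ) :
    ∫ ω, gridTime ξ j ω ∂P = j / ρ := by
  unfold gridTime
  rw [MeasureTheory.integral_finset_sum _
    (fun i _ => (xi_memLp2 hξ hρ i).integrable one_le_two)]
  simp only [xi_integral hξ hρ]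
  rw [Finset.sum_const, Finset.card_range]
  simp [mul_one_div, div_eq_mul_inv]

lemma gridTime_variance (hξ : IsExpSeq P ρ ξ) (hρ : 0 < ρ) (j : ℕ) :
    variance (gridTime ξ j) P = j / ρ ^ 2 := by
  rw [gridTime_eq_sum]
  rw [IndepFun.variance_sum (fun i _ => xi_memLp2 hξ hρ i)
    (fun a _ b _ hab => hξ.2.1.indepFun hab)]
  simp only [xi_variance hξ hρ]
  rw [Finset.sum_const, Finset.card_range]
  simp [mul_one_div, div_eq_mul_inv]

lemma gridTime_chebyshev (hξ : IsExpSeq P ρ ξ) (hρ : 0 < ρ) (j : ℕ) {c : ℝ} (hc : 0 < c) :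
    P {ω | c ≤ |gridTime ξ j ω - (j : ℝ) / ρ|}
      ≤ ENNReal.ofReal (((j : ℝ) / ρ ^ 2) / c ^ 2) := by
  have h := meas_ge_le_variance_div_sq (μ := P) (gridTime_memLp2 hξ hρ j) hc
  rw [gridTime_variance hξ hρ j] at h
  have hint : P[gridTime ξ j] = (j : ℝ) / ρ := gridTime_integral hξ hρ j
  rw [hint] at h
  exact h

end OmegaLemmas

section ProbLemma

lemma gridTime_mono {Ω : Type*} {ξ : ℕ → Ω → ℝ} {ω : Ω} (h : ∀ i, 0 ≤ ξ i ω) :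
    Monotone (fun j => gridTime ξ j ω) := by
  intro a b hab
  simp only [gridTime]
  exact Finset.sum_le_sum_of_subset_of_nonneg
    (Finset.range_subset_range.mpr hab) (fun i _ _ => h i)

lemma gridTime_nonneg {Ω : Type*} {ξ : ℕ → Ω → ℝ} {ω : Ω} (h : ∀ i, 0 ≤ ξ i ω) (j : ℕ) :
    0 ≤ gridTime ξ j ω := by
  have := gridTime_mono h (Nat.zero_le j)
  simpa [gridTime] using this

lemma bracket_aux {δ : ℝ} (hδ : 0 < δ) (Tj : ℕ → ℝ) (mono : Monotone Tj)
    {n m kk i : ℕ} (hn : 1 ≤ n) (hm : 1 ≤ m) (hmn : (m : ℝ) / n ≤ δ / 2) (hik : i ≤ kk)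
    (h : δ < |Tj i - (i : ℝ) / n|) :
    ∃ l ≤ kk / m + 1, δ / 2 ≤ |Tj (m * l) - ((m * l : ℕ) : ℝ) / n| := by
  by_contra hcon
  push_neg at hcon
  have hm0 : 0 < m := hm
  have hn0 : (0:ℝ) < n := by exact_mod_cast hn
  set l₁ := i / m with hl₁def
  have hl₁ : l₁ ≤ kk / m + 1 := le_trans (Nat.div_le_div_right hik) (Nat.le_succ _)
  have hl₂ : l₁ + 1 ≤ kk / m + 1 := Nat.succ_le_succ (Nat.div_le_div_right hik)
  have h₁ := hcon l₁ hl₁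
  have h₂ := hcon (l₁ + 1) hl₂
  rw [abs_lt] at h₁ h₂
  have hle1 : m * l₁ ≤ i := Nat.mul_div_le i m
  have hle2 : i < m * (l₁ + 1) := Nat.lt_mul_div_succ i hm0
  have hle1' : ((m * l₁ : ℕ) : ℝ) ≤ i := by exact_mod_cast hle1
  have hle2' : (i : ℝ) ≤ ((m * (l₁ + 1) : ℕ) : ℝ) := by exact_mod_cast hle2.le
  have hmono1 : Tj (m * l₁) ≤ Tj i := mono hle1
  have hmono2 : Tj i ≤ Tj (m * (l₁ + 1)) := mono hle2.le
  have hcast : ((m * (l₁ + 1) : ℕ) : ℝ) = ((m * l₁ : ℕ) : ℝ) + m := by push_cast; ring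
  -- divide index inequalities by n
  have hdiv1 : (i : ℝ) / n ≤ (((m * l₁ : ℕ) : ℝ) + m) / n := by
    gcongr
    linarith [hle2', hcast]
  have hdiv2 : (((m * (l₁ + 1) : ℕ) : ℝ) - m) / n ≤ (i : ℝ) / n := by
    gcongr
    linarith [hle1', hcast]
  rw [add_div] at hdiv1
  rw [sub_div] at hdiv2
  have habs : |Tj i - (i : ℝ) / n| < δ := by
    rw [abs_lt]
    constructor
    · have key : Tj (m * l₁) - ((m * l₁ : ℕ) : ℝ) / n - (m : ℝ) / n ≤ Tj i - (i : ℝ) / n := by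
        linarith
      linarith [h₁.1]
    · have key : Tj i - (i : ℝ) / n
          ≤ Tj (m * (l₁ + 1)) - ((m * (l₁ + 1) : ℕ) : ℝ) / n + (m : ℝ) / n := by
        linarith
      linarith [h₂.2]
  linarith

lemma prob_tendsto {Ω : Type*} [MeasurableSpace Ω] (P : Measure Ω) [IsProbabilityMeasure P]
    (ξ : ℕ → ℕ → Ω → ℝ) (hξ : ∀ n : ℕ, 1 ≤ n → IsExpSeq P (n : ℝ) (ξ n))
    (T : ℝ) (hT : 0 ≤ T) (k : ℕ → ℕ)
    (hk : Tendsto (fun n : ℕ => (k n : ℝ) / n) atTop (nhds T))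
    (δ : ℝ) (hδ : 0 < δ) :
    Tendsto (fun n : ℕ => (P (⋃ i ∈ Finset.range (k n + 1),
      {ω | δ < |gridTime (ξ n) i ω - (i : ℝ) / (n : ℝ)|})).toReal) atTop (nhds 0) := by
  set Q : ℝ := 4 * (T + 1) / δ + 1 with hQdef
  have hQpos : 0 < Q := by positivity
  set C : ℝ := (Q + 1) * Q * (2 / δ) with hCdef
  apply squeeze_zero' (g := fun n : ℕ => C / n)
  · filter_upwards with n; positivity
  · have hev1 : ∀ᶠ n : ℕ in atTop, (4 : ℝ) / δ ≤ n := by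
      obtain ⟨N, hN⟩ := exists_nat_ge ((4:ℝ)/δ)
      filter_upwards [eventually_ge_atTop N] with n hn
      exact le_trans hN (by exact_mod_cast hn)
    have hev2 : ∀ᶠ n : ℕ in atTop, (k n : ℝ) / n ≤ T + 1 :=
      hk.eventually (eventually_le_nhds (lt_add_one T))
    filter_upwards [hev1, hev2, eventually_ge_atTop 1] with n hn4 hkn hn1
    -- setup
    have hn0 : (0:ℝ) < n := by exact_mod_cast hn1
    have hnd : (4:ℝ) ≤ n * δ := by
      rw [div_le_iff₀ hδ] at hn4; linarith
    set m : ℕ := ⌊(n : ℝ) * δ / 2⌋₊ with hmdef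
    have hm_le : (m : ℝ) ≤ (n:ℝ) * δ / 2 := Nat.floor_le (by positivity)
    have hm_gt : (n:ℝ) * δ / 2 - 1 < m := Nat.sub_one_lt_floor _
    have hm_ge : (n:ℝ) * δ / 4 ≤ m := by nlinarith
    have hm1 : 1 ≤ m := by
      have : (1:ℝ) ≤ m := by nlinarith
      exact_mod_cast this
    have hm0' : (0:ℝ) < m := by
      have : (0:ℝ) < (1:ℕ) := by norm_num
      calc (0:ℝ) < 1 := one_pos
        _ ≤ m := by exact_mod_cast hm1
    have hmn : (m : ℝ) / n ≤ δ / 2 := by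
      rw [div_le_iff₀ hn0]; nlinarith
    set q : ℕ := k n / m + 1 with hqdef
    have hq_le : (q : ℝ) ≤ Q := by
      have h1 : ((k n / m : ℕ) : ℝ) ≤ (k n : ℝ) / m := Nat.cast_div_le
      have h2 : (k n : ℝ) ≤ (T + 1) * n := by
        rw [div_le_iff₀ hn0] at hkn; linarith
      have h3 : (k n : ℝ) / m ≤ 4 * (T + 1) / δ := by
        rw [div_le_div_iff₀ hm0' hδ]
        nlinarith
      have : (q:ℝ) = ((k n / m : ℕ) : ℝ) + 1 := by push_cast [hqdef]; ring
      rw [this, hQdef]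
      linarith
    -- a.e. inclusion into coarse union
    set U : Set Ω := ⋃ l ∈ Finset.range (q + 1),
      {ω | δ / 2 ≤ |gridTime (ξ n) (m * l) ω - ((m * l : ℕ) : ℝ) / n|} with hUdef
    have hincl : (⋃ i ∈ Finset.range (k n + 1),
        {ω | δ < |gridTime (ξ n) i ω - (i : ℝ) / (n : ℝ)|}) ≤ᵐ[P] U := by
      filter_upwards [xi_pos_ae (hξ n hn1) (by exact_mod_cast hn0)] with ω hω
      intro hE
      have hE2 : ω ∈ ⋃ i ∈ Finset.range (k n + 1),
          {ω | δ < |gridTime (ξ n) i ω - (i : ℝ) / (n : ℝ)|} := hE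
      show ω ∈ U
      rw [Set.mem_iUnion₂] at hE2
      replace hE := hE2
      obtain ⟨i, hik, hi⟩ := hE
      rw [Finset.mem_range] at hik
      rw [Set.mem_setOf_eq] at hi
      obtain ⟨l, hl, hlb⟩ := bracket_aux hδ (fun j => gridTime (ξ n) j ω)
        (gridTime_mono (fun i => (hω i).le)) hn1 hm1 hmn (Nat.lt_succ_iff.mp hik) hi
      rw [hUdef, Set.mem_iUnion₂]
      exact ⟨l, Finset.mem_range.mpr (Nat.lt_succ_iff.mpr hl), hlb⟩
    have hPU : P (⋃ i ∈ Finset.range (k n + 1),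
        {ω | δ < |gridTime (ξ n) i ω - (i : ℝ) / (n : ℝ)|}) ≤ P U :=
      measure_mono_ae hincl
    -- union bound + chebyshev
    have hcheb : ∀ l : ℕ, P {ω | δ / 2 ≤ |gridTime (ξ n) (m * l) ω - ((m * l : ℕ) : ℝ) / n|}
        ≤ ENNReal.ofReal ((((m * l : ℕ) : ℝ) / (n:ℝ) ^ 2) / (δ / 2) ^ 2) := by
      intro l
      exact gridTime_chebyshev (hξ n hn1) (by exact_mod_cast hn0) (m * l) (by positivity)
    have hsum : P U ≤ ∑ l ∈ Finset.range (q + 1),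
        ENNReal.ofReal ((((m * l : ℕ) : ℝ) / (n:ℝ) ^ 2) / (δ / 2) ^ 2) := by
      refine le_trans (measure_biUnion_finset_le _ _) ?_
      exact Finset.sum_le_sum (fun l _ => hcheb l)
    set B : ℝ := ∑ l ∈ Finset.range (q + 1), ((((m * l : ℕ) : ℝ) / (n:ℝ) ^ 2) / (δ / 2) ^ 2)
      with hBdef
    have hsum2 : ∑ l ∈ Finset.range (q + 1),
        ENNReal.ofReal ((((m * l : ℕ) : ℝ) / (n:ℝ) ^ 2) / (δ / 2) ^ 2) = ENNReal.ofReal B := by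
      rw [hBdef, ENNReal.ofReal_sum_of_nonneg]
      intro l _
      positivity
    have hBnn : 0 ≤ B := by
      rw [hBdef]; apply Finset.sum_nonneg; intro l _; positivity
    have htoReal : (P (⋃ i ∈ Finset.range (k n + 1),
        {ω | δ < |gridTime (ξ n) i ω - (i : ℝ) / (n : ℝ)|})).toReal ≤ B := by
      apply ENNReal.toReal_le_of_le_ofReal hBnn
      rw [← hsum2]
      exact le_trans hPU hsum
    refine le_trans htoReal ?_
    -- bound B by C / n
    have hterm : ∀ l ∈ Finset.range (q + 1),
        ((((m * l : ℕ) : ℝ) / (n:ℝ) ^ 2) / (δ / 2) ^ 2)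
          ≤ ((m : ℝ) * Q / (n:ℝ) ^ 2) / (δ / 2) ^ 2 := by
      intro l hl
      have hlq : (l : ℝ) ≤ Q := by
        have : l ≤ q := Nat.lt_succ_iff.mp (Finset.mem_range.mp hl)
        calc (l:ℝ) ≤ q := by exact_mod_cast this
          _ ≤ Q := hq_le
      have : ((m * l : ℕ) : ℝ) ≤ (m : ℝ) * Q := by
        push_cast
        nlinarith
      gcongr
    have hB_le : B ≤ (q + 1 : ℝ) * (((m : ℝ) * Q / (n:ℝ) ^ 2) / (δ / 2) ^ 2) := by
      rw [hBdef]
      have := Finset.sum_le_card_nsmul (Finset.range (q + 1)) _ _ hterm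
      rw [Finset.card_range] at this
      calc B ≤ (q + 1) • (((m : ℝ) * Q / (n:ℝ) ^ 2) / (δ / 2) ^ 2) := this
        _ = (q + 1 : ℝ) * (((m : ℝ) * Q / (n:ℝ) ^ 2) / (δ / 2) ^ 2) := by
            rw [nsmul_eq_mul]; push_cast; ring
    refine le_trans hB_le ?_
    have hq1 : (q + 1 : ℝ) ≤ Q + 1 := by linarith
    have hfin : ((Q + 1) : ℝ) * (((n:ℝ) * δ / 2 * Q / (n:ℝ) ^ 2) / (δ / 2) ^ 2) = C / n := by
      rw [hCdef]
      field_simp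
    calc (q + 1 : ℝ) * (((m : ℝ) * Q / (n:ℝ) ^ 2) / (δ / 2) ^ 2)
        ≤ (Q + 1) * ((((n:ℝ) * δ / 2) * Q / (n:ℝ) ^ 2) / (δ / 2) ^ 2) := by gcongr
      _ = C / n := hfin
  · exact tendsto_const_div_atTop_nhds_zero_nat C

section Measurability

variable {Ω : Type*} [MeasurableSpace Ω]

lemma measurable_gridTime {ξ : ℕ → Ω → ℝ} (hmeas : ∀ i, Measurable (ξ i)) (j : ℕ) :
    Measurable (gridTime ξ j) := by
  unfold gridTime
  exact Finset.measurable_sum _ (fun i _ => hmeas i)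

lemma nat_sSup_eq_succ_iff {S : Set ℕ} {j : ℕ} :
    sSup S = j + 1 ↔ (∀ a ∈ S, a ≤ j + 1) ∧ ¬(∀ a ∈ S, a ≤ j) := by
  classical
  constructor
  · intro h
    by_cases hb : ∃ b, ∀ a ∈ S, a ≤ b
    · rw [Nat.sSup_def hb] at h
      constructor
      · rw [← h]; exact Nat.find_spec hb
      · intro hub
        have : Nat.find hb ≤ j := Nat.find_le hub
        omega
    · exfalso
      have : sSup S = 0 := dif_neg hb
      omega
  · rintro ⟨h1, h2⟩
    have hb : ∃ b, ∀ a ∈ S, a ≤ b := ⟨j + 1, h1⟩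
    rw [Nat.sSup_def hb]
    have hle : Nat.find hb ≤ j + 1 := Nat.find_le h1
    have hgt : j < Nat.find hb := by
      by_contra hc
      push_neg at hc
      exact h2 (fun a ha => le_trans (Nat.find_spec hb a ha) hc)
    omega

lemma nat_sSup_eq_zero_iff {S : Set ℕ} :
    sSup S = 0 ↔ (∀ a ∈ S, a = 0) ∨ ¬(∃ b, ∀ a ∈ S, a ≤ b) := by
  classical
  constructor
  · intro h
    by_cases hb : ∃ b, ∀ a ∈ S, a ≤ b
    · left
      rw [Nat.sSup_def hb] at h
      have := Nat.find_spec hb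
      rw [h] at this
      exact fun a ha => Nat.le_zero.mp (this a ha)
    · right; exact hb
  · rintro (h | h)
    · have hb : ∃ b, ∀ a ∈ S, a ≤ b := ⟨0, fun a ha => (h a ha).le⟩
      rw [Nat.sSup_def hb]
      exact Nat.le_zero.mp (Nat.find_le (fun a ha => (h a ha).le))
    · exact dif_neg h

lemma measurable_countProc {ξ : ℕ → Ω → ℝ} (hmeas : ∀ i, Measurable (ξ i)) (s : ℝ) :
    Measurable (countProc ξ s) := by
  apply measurable_to_countable'
  intro j
  have hA : ∀ a : ℕ, MeasurableSet {ω | gridTime ξ a ω ≤ s} := fun a =>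
    measurableSet_le (measurable_gridTime hmeas a) measurable_const
  -- UB j ω : all elements of S ω are ≤ j
  have hUB : ∀ j : ℕ, MeasurableSet {ω | ∀ a, gridTime ξ a ω ≤ s → a ≤ j} := by
    intro j
    have : {ω | ∀ a, gridTime ξ a ω ≤ s → a ≤ j}
        = ⋂ (a : ℕ) (_ : j < a), {ω | gridTime ξ a ω ≤ s}ᶜ := by
      ext ω
      simp only [Set.mem_setOf_eq, Set.mem_iInter, Set.mem_compl_iff]
      constructor
      · intro h a ha hle
        exact absurd (h a hle) (by omega)
      · intro h a ha
        by_contra hc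
        exact h a (by omega) ha
    rw [this]
    exact MeasurableSet.iInter (fun a => MeasurableSet.iInter (fun _ => (hA a).compl))
  cases j with
  | zero =>
    have : countProc ξ s ⁻¹' {0}
        = {ω | ∀ a, gridTime ξ a ω ≤ s → a = 0}
          ∪ {ω | ∃ b, ∀ a, gridTime ξ a ω ≤ s → a ≤ b}ᶜ := by
      ext ω
      simp only [Set.mem_preimage, Set.mem_singleton_iff, Set.mem_union, Set.mem_setOf_eq,
        Set.mem_compl_iff, countProc]
      rw [nat_sSup_eq_zero_iff]
      simp only [Set.mem_setOf_eq]
    rw [this]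
    apply MeasurableSet.union
    · have : {ω | ∀ a, gridTime ξ a ω ≤ s → a = 0}
          = ⋂ (a : ℕ) (_ : 0 < a), {ω | gridTime ξ a ω ≤ s}ᶜ := by
        ext ω
        simp only [Set.mem_setOf_eq, Set.mem_iInter, Set.mem_compl_iff]
        constructor
        · intro h a ha hle
          exact absurd (h a hle) (by omega)
        · intro h a ha
          by_contra hc
          exact h a (by omega) ha
      rw [this]
      exact MeasurableSet.iInter (fun a => MeasurableSet.iInter (fun _ => (hA a).compl))
    · have : {ω | ∃ b, ∀ a, gridTime ξ a ω ≤ s → a ≤ b}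
          = ⋃ b : ℕ, {ω | ∀ a, gridTime ξ a ω ≤ s → a ≤ b} := by
        ext ω
        simp only [Set.mem_setOf_eq, Set.mem_iUnion]
      apply MeasurableSet.compl
      rw [this]
      exact MeasurableSet.iUnion (fun b => hUB b)
  | succ j =>
    have : countProc ξ s ⁻¹' {j + 1}
        = {ω | ∀ a, gridTime ξ a ω ≤ s → a ≤ j + 1}
          ∩ {ω | ∀ a, gridTime ξ a ω ≤ s → a ≤ j}ᶜ := by
      ext ω
      simp only [Set.mem_preimage, Set.mem_singleton_iff, Set.mem_inter_iff, Set.mem_setOf_eq,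
        Set.mem_compl_iff, countProc]
      rw [nat_sSup_eq_succ_iff]
      simp only [Set.mem_setOf_eq]
    rw [this]
    exact (hUB (j + 1)).inter (hUB j).compl

lemma pairFiltration_le {X : ℝ → Ω → ℝ} {ξ : ℕ → Ω → ℝ}
    (hX : ∀ t, Measurable (X t)) (hmeas : ∀ i, Measurable (ξ i)) (t : ℝ) :
    pairFiltration X (countProc ξ) t ≤ ‹MeasurableSpace Ω› := by
  unfold pairFiltration
  apply iSup_le
  intro s
  apply iSup_le
  intro _
  apply sup_le
  · exact (hX s).comap_le
  · exact (measurable_countProc hmeas s).comap_le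

lemma measurable_of_gridStoppingTime {X : ℝ → Ω → ℝ} {ξ : ℕ → Ω → ℝ}
    (hX : ∀ t, Measurable (X t)) (hmeas : ∀ i, Measurable (ξ i))
    {τ : Ω → ℝ} (hτ : τ ∈ gridStoppingTimes X ξ) : Measurable τ := by
  apply measurable_of_Iic
  intro t
  have := hτ.1 t
  exact pairFiltration_le hX hmeas t _ this

lemma zero_mem_gridStoppingTimes (X : ℝ → Ω → ℝ) (ξ : ℕ → Ω → ℝ) :
    (fun _ => (0:ℝ)) ∈ gridStoppingTimes X ξ := by
  constructor
  · intro t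
    by_cases h : (0:ℝ) ≤ t
    · have : {ω : Ω | (0:ℝ) ≤ t} = Set.univ := by ext ω; simp [h]
      rw [this]
      exact @MeasurableSet.univ Ω (pairFiltration X (countProc ξ) t)
    · have : {ω : Ω | (0:ℝ) ≤ t} = ∅ := by ext ω; simp [h]
      rw [this]
      exact @MeasurableSet.empty Ω (pairFiltration X (countProc ξ) t)
  · intro ω
    exact ⟨0, by simp [gridTime]⟩

end Measurability

section PerTau

lemma exp_neg_sub_le {a b : ℝ} (ha : 0 ≤ a) (hab : a ≤ b) :
    Real.exp (-a) - Real.exp (-b) ≤ b - a := by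
  have h1 : Real.exp (-a) ≤ 1 := Real.exp_le_one_iff.mpr (by linarith)
  have h2 : (a - b) + 1 ≤ Real.exp (a - b) := Real.add_one_le_exp _
  have h3 : Real.exp (-a) * Real.exp (a - b) = Real.exp (-b) := by
    rw [← Real.exp_add]; ring_nf
  have h4 : 0 < Real.exp (-a) := Real.exp_pos _
  have h5 : Real.exp (a - b) ≤ 1 := Real.exp_le_one_iff.mpr (by linarith)
  nlinarith

lemma exp_neg_lipschitz {a b : ℝ} (ha : 0 ≤ a) (hb : 0 ≤ b) :
    |Real.exp (-a) - Real.exp (-b)| ≤ |a - b| := by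
  rcases le_total a b with h | h
  · rw [abs_of_nonneg (by linarith [Real.exp_le_exp.mpr (neg_le_neg h)]),
      abs_of_nonpos (by linarith)]
    have := exp_neg_sub_le ha h
    linarith
  · rw [abs_of_nonpos (by linarith [Real.exp_le_exp.mpr (neg_le_neg h)]),
      abs_of_nonneg (by linarith)]
    have := exp_neg_sub_le hb h
    linarith

variable {Ω : Type*} [MeasurableSpace Ω] {P : Measure Ω} [IsProbabilityMeasure P]

lemma abs_int_le_int_abs (g : Ω → ℝ) : |∫ ω, g ω ∂P| ≤ ∫ ω, |g ω| ∂P := by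
  simpa [Real.norm_eq_abs] using MeasureTheory.norm_integral_le_integral_norm (μ := P) g

lemma gridTime_strictMono {ξ : ℕ → Ω → ℝ} {ω : Ω} (h : ∀ i, 0 < ξ i ω) :
    StrictMono (fun j => gridTime ξ j ω) := by
  intro a b hab
  simp only [gridTime]
  have hsplit : ∑ i ∈ Finset.range b, ξ i ω
      = ∑ i ∈ Finset.range a, ξ i ω + ∑ i ∈ Finset.Ico a b, ξ i ω := by
    exact (Finset.sum_range_add_sum_Ico _ hab.le).symm
  have hpos : 0 < ∑ i ∈ Finset.Ico a b, ξ i ω :=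
    Finset.sum_pos (fun i _ => h i) (Finset.nonempty_Ico.mpr hab)
  linarith

lemma per_tau_bound
    {X : ℝ → Ω → ℝ} (hX : ∀ t, Measurable (X t))
    {n : ℕ} (hn : 1 ≤ n) {ξ : ℕ → Ω → ℝ} (hξ : IsExpSeq P (n : ℝ) ξ)
    (f : ℝ → ℝ) {M : ℝ} (hfb : ∀ y, |f y| ≤ M)
    {r : ℝ} (hr : 0 ≤ r) (x : ℝ) (kk : ℕ) {δ : ℝ} (hδ : 0 < δ)
    {τ : Ω → ℝ} (hτ : τ ∈ gridStoppingTimes X ξ) :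
    |∫ ω, discount r n ξ (fun ω' => min (τ ω') (gridTime ξ kk ω')) ω
        * f (x + X (min (τ ω) (gridTime ξ kk ω)) ω) ∂P
      - ∫ ω, Real.exp (-(r * min (τ ω) (gridTime ξ kk ω)))
        * f (x + X (min (τ ω) (gridTime ξ kk ω)) ω) ∂P|
      ≤ M * (r * δ + 2 * (P (⋃ i ∈ Finset.range (kk + 1),
          {ω | δ < |gridTime ξ i ω - (i : ℝ) / (n : ℝ)|})).toReal)
    ∧ |∫ ω, discount r n ξ (fun ω' => min (τ ω') (gridTime ξ kk ω')) ω
        * f (x + X (min (τ ω) (gridTime ξ kk ω)) ω) ∂P| ≤ M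
    ∧ |∫ ω, Real.exp (-(r * min (τ ω) (gridTime ξ kk ω)))
        * f (x + X (min (τ ω) (gridTime ξ kk ω)) ω) ∂P| ≤ M := by
  have hn0 : (0:ℝ) < n := by exact_mod_cast hn
  have hM0 : 0 ≤ M := le_trans (abs_nonneg _) (hfb 0)
  -- notation
  set σ : Ω → ℝ := fun ω => min (τ ω) (gridTime ξ kk ω) with hσdef
  set F : Ω → ℝ := fun ω => f (x + X (σ ω) ω) with hFdef
  set D : Ω → ℝ := fun ω => discount r n ξ σ ω with hDdef
  set Dfin : Ω → ℝ := fun ω => ∑ i ∈ Finset.range (kk + 1),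
    Set.indicator {ω' | σ ω' = gridTime ξ i ω'} (fun _ => Real.exp (-(r * i / n))) ω
    with hDfindef
  set c₂ : Ω → ℝ := fun ω => Real.exp (-(r * σ ω)) with hc₂def
  set E : Set Ω := ⋃ i ∈ Finset.range (kk + 1),
    {ω | δ < |gridTime ξ i ω - (i : ℝ) / (n : ℝ)|} with hEdef
  -- measurability
  have hτmeas : Measurable τ := measurable_of_gridStoppingTime hX hξ.1 hτ
  have hσmeas : Measurable σ := hτmeas.min (measurable_gridTime hξ.1 kk)
  have hDfinmeas : Measurable Dfin := by
    apply Finset.measurable_sum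
    intro i _
    exact Measurable.indicator measurable_const
      (measurableSet_eq_fun hσmeas (measurable_gridTime hξ.1 i))
  have hc₂meas : Measurable c₂ := ((measurable_const.mul hσmeas).neg).exp
  have hEmeas : MeasurableSet E := by
    apply Finset.measurableSet_biUnion
    intro i _
    exact measurableSet_lt measurable_const
      ((measurable_gridTime hξ.1 i).sub measurable_const).abs
  -- a.e. representation
  have hae : ∀ᵐ ω ∂P, ∃ I, I ≤ kk ∧ σ ω = gridTime ξ I ω
      ∧ D ω = Real.exp (-(r * I / n)) ∧ Dfin ω = Real.exp (-(r * I / n))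
      ∧ (∀ j, 0 ≤ gridTime ξ j ω) := by
    filter_upwards [xi_pos_ae hξ hn0] with ω hpos
    obtain ⟨j, hj⟩ := hτ.2 ω
    have hsm : StrictMono (fun j => gridTime ξ j ω) := gridTime_strictMono hpos
    have hmono : Monotone (fun j => gridTime ξ j ω) := hsm.monotone
    refine ⟨min j kk, min_le_right _ _, ?_, ?_, ?_, fun j => gridTime_nonneg
      (fun i => (hpos i).le) j⟩
    · show min (τ ω) (gridTime ξ kk ω) = _
      rw [hj, ← Monotone.map_min hmono]
    · have hmin : σ ω = gridTime ξ (min j kk) ω := by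
        show min (τ ω) (gridTime ξ kk ω) = _
        rw [hj, ← Monotone.map_min hmono]
      show discount r n ξ σ ω = _
      unfold discount
      have hzero : ∀ b, b ≠ min j kk →
          Set.indicator {ω' | σ ω' = gridTime ξ b ω'}
            (fun _ => Real.exp (-(r * b / n))) ω = 0 := by
        intro b hb
        apply Set.indicator_of_notMem
        intro hmem
        apply hb
        apply hsm.injective
        rw [Set.mem_setOf_eq] at hmem
        exact (hmin ▸ hmem).symm
      exact (tsum_eq_single (f := fun i : ℕ => Set.indicator {ω' | σ ω' = gridTime ξ i ω'}
        (fun _ => Real.exp (-(r * i / n))) ω) (min j kk) hzero).trans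
        (Set.indicator_of_mem (show ω ∈ {ω' | σ ω' = gridTime ξ (min j kk) ω'} from hmin) _)
    · have hmin : σ ω = gridTime ξ (min j kk) ω := by
        show min (τ ω) (gridTime ξ kk ω) = _
        rw [hj, ← Monotone.map_min hmono]
      simp only [hDfindef]
      have hzero : ∀ b ∈ Finset.range (kk + 1), b ≠ min j kk →
          Set.indicator {ω' | σ ω' = gridTime ξ b ω'}
            (fun _ => Real.exp (-(r * b / n))) ω = 0 := by
        intro b _ hb
        apply Set.indicator_of_notMem
        intro hmem
        apply hb
        apply hsm.injective
        rw [Set.mem_setOf_eq] at hmem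
        exact (hmin ▸ hmem).symm
      exact (Finset.sum_eq_single_of_mem (min j kk)
        (Finset.mem_range.mpr (Nat.lt_succ_iff.mpr (min_le_right _ _))) hzero).trans
        (Set.indicator_of_mem (show ω ∈ {ω' | σ ω' = gridTime ξ (min j kk) ω'} from hmin) _)
  -- consequences
  have hDeq : D =ᵐ[P] Dfin := by
    filter_upwards [hae] with ω ⟨I, _, _, hD, hDfin, _⟩
    rw [hD, hDfin]
  have hDfin_le : ∀ᵐ ω ∂P, |Dfin ω| ≤ 1 := by
    filter_upwards [hae] with ω ⟨I, _, _, _, hDfin, _⟩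
    rw [hDfin, abs_of_pos (Real.exp_pos _), Real.exp_le_one_iff]
    have : (0:ℝ) ≤ r * I / n := by positivity
    linarith
  have hσ_nonneg : ∀ᵐ ω ∂P, 0 ≤ σ ω := by
    filter_upwards [hae] with ω ⟨I, _, hmin, _, _, hnn⟩
    rw [hmin]; exact hnn I
  have hc₂_le : ∀ᵐ ω ∂P, |c₂ ω| ≤ 1 := by
    filter_upwards [hσ_nonneg] with ω hσnn
    simp only [hc₂def]
    rw [abs_of_pos (Real.exp_pos _), Real.exp_le_one_iff]
    have : (0:ℝ) ≤ r * σ ω := mul_nonneg hr hσnn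
    linarith
  have hdiff : ∀ᵐ ω ∂P, |Dfin ω - c₂ ω|
      ≤ r * δ + Set.indicator E (fun _ => (2:ℝ)) ω := by
    filter_upwards [hae] with ω ⟨I, hIk, hmin, _, hDfin, hnn⟩
    by_cases hEω : ω ∈ E
    · rw [Set.indicator_of_mem hEω]
      have h1 : |Dfin ω| ≤ 1 := by
        rw [hDfin, abs_of_pos (Real.exp_pos _), Real.exp_le_one_iff]
        have : (0:ℝ) ≤ r * I / n := by positivity
        linarith
      have h2 : |c₂ ω| ≤ 1 := by
        simp only [hc₂def]
        rw [abs_of_pos (Real.exp_pos _), Real.exp_le_one_iff]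
        have : (0:ℝ) ≤ r * σ ω := mul_nonneg hr (hmin ▸ hnn I)
        linarith
      have : |Dfin ω - c₂ ω| ≤ |Dfin ω| + |c₂ ω| := abs_sub _ _
      have hrδ : 0 ≤ r * δ := mul_nonneg hr hδ.le
      linarith
    · rw [Set.indicator_of_notMem hEω, add_zero]
      have hsmall : |gridTime ξ I ω - (I : ℝ) / n| ≤ δ := by
        by_contra hc
        push_neg at hc
        apply hEω
        rw [hEdef, Set.mem_iUnion₂]
        exact ⟨I, Finset.mem_range.mpr (Nat.lt_succ_of_le hIk), hc⟩
      have e1 : Dfin ω = Real.exp (-(r * I / n)) := hDfin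
      have e2 : c₂ ω = Real.exp (-(r * gridTime ξ I ω)) := by
        simp only [hc₂def]
        rw [hmin]
      rw [e1, e2]
      have hlip := exp_neg_lipschitz (a := r * I / n) (b := r * gridTime ξ I ω)
        (by positivity) (mul_nonneg hr (hmin ▸ hnn I))
      refine le_trans hlip ?_
      have : r * I / n - r * gridTime ξ I ω = r * ((I : ℝ) / n - gridTime ξ I ω) := by
        ring
      rw [this, abs_mul, abs_of_nonneg hr]
      have : |(I : ℝ) / n - gridTime ξ I ω| ≤ δ := by
        rw [abs_sub_comm]
        exact hsmall
      exact mul_le_mul_of_nonneg_left this hr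
  by_cases hF : AEStronglyMeasurable F P
  · -- integrable case
    have hint1 : Integrable (fun ω => Dfin ω * F ω) P := by
      apply Integrable.mono' (integrable_const M)
        (hDfinmeas.aestronglyMeasurable.mul hF)
      filter_upwards [hDfin_le] with ω h1
      show ‖Dfin ω * F ω‖ ≤ M
      rw [Real.norm_eq_abs, abs_mul]
      calc |Dfin ω| * |F ω| ≤ 1 * M :=
        mul_le_mul h1 (hfb _) (abs_nonneg _) zero_le_one
      _ = M := one_mul M
    have hint2 : Integrable (fun ω => c₂ ω * F ω) P := by
      apply Integrable.mono' (integrable_const M)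
        (hc₂meas.aestronglyMeasurable.mul hF)
      filter_upwards [hc₂_le] with ω h1
      show ‖c₂ ω * F ω‖ ≤ M
      rw [Real.norm_eq_abs, abs_mul]
      calc |c₂ ω| * |F ω| ≤ 1 * M :=
        mul_le_mul h1 (hfb _) (abs_nonneg _) zero_le_one
      _ = M := one_mul M
    have heqint : ∫ ω, D ω * F ω ∂P = ∫ ω, Dfin ω * F ω ∂P := by
      apply integral_congr_ae
      filter_upwards [hDeq] with ω h
      rw [h]
    have hgint : Integrable (fun ω => r * δ * M
        + Set.indicator E (fun _ => 2 * M) ω) P :=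
      (integrable_const _).add ((integrable_const (2 * M)).indicator hEmeas)
    refine ⟨?_, ?_, ?_⟩
    · rw [heqint, ← integral_sub hint1 hint2]
      refine le_trans (abs_int_le_int_abs _) ?_
      have hmono : ∀ᵐ ω ∂P, |Dfin ω * F ω - c₂ ω * F ω|
          ≤ r * δ * M + Set.indicator E (fun _ => 2 * M) ω := by
        filter_upwards [hdiff] with ω h
        have heq : Dfin ω * F ω - c₂ ω * F ω = (Dfin ω - c₂ ω) * F ω := by ring
        rw [heq, abs_mul]
        by_cases hEω : ω ∈ E
        · rw [Set.indicator_of_mem hEω] at h ⊢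
          calc |Dfin ω - c₂ ω| * |F ω| ≤ (r * δ + 2) * M :=
            mul_le_mul h (hfb _) (abs_nonneg _) (by positivity)
          _ = r * δ * M + 2 * M := by ring
        · rw [Set.indicator_of_notMem hEω] at h ⊢
          rw [add_zero] at h ⊢
          calc |Dfin ω - c₂ ω| * |F ω| ≤ (r * δ) * M :=
            mul_le_mul h (hfb _) (abs_nonneg _) (by positivity)
          _ = r * δ * M := by ring
      refine le_trans (integral_mono_ae (hint1.sub hint2).abs hgint hmono) ?_
      rw [integral_add (integrable_const _) ((integrable_const (2 * M)).indicator hEmeas),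
        integral_const, integral_indicator_const _ hEmeas]
      simp only [measureReal_def, measure_univ, ENNReal.toReal_one, smul_eq_mul]
      have hP : (0:ℝ) ≤ (P E).toReal := ENNReal.toReal_nonneg
      nlinarith
    · rw [heqint]
      refine le_trans (abs_int_le_int_abs _) ?_
      have := integral_mono_ae hint1.abs (integrable_const M) ?_
      · calc ∫ ω, |Dfin ω * F ω| ∂P ≤ ∫ _, M ∂P := this
          _ = M := by simp [measure_univ]
      · filter_upwards [hDfin_le] with ω h1
        rw [abs_mul]
        calc |Dfin ω| * |F ω| ≤ 1 * M :=
          mul_le_mul h1 (hfb _) (abs_nonneg _) zero_le_one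
        _ = M := one_mul M
    · refine le_trans (abs_int_le_int_abs _) ?_
      have := integral_mono_ae hint2.abs (integrable_const M) ?_
      · calc ∫ ω, |c₂ ω * F ω| ∂P ≤ ∫ _, M ∂P := this
          _ = M := by simp [measure_univ]
      · filter_upwards [hc₂_le] with ω h1
        rw [abs_mul]
        calc |c₂ ω| * |F ω| ≤ 1 * M :=
          mul_le_mul h1 (hfb _) (abs_nonneg _) zero_le_one
        _ = M := one_mul M
  · -- non-measurable case : both integrals are zero
    have hDfin_ne : ∀ᵐ ω ∂P, Dfin ω ≠ 0 := by
      filter_upwards [hae] with ω ⟨I, _, _, _, hDfin, _⟩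
      rw [hDfin]
      exact (Real.exp_pos _).ne'
    have h1 : ¬ Integrable (fun ω => D ω * F ω) P := by
      intro h
      apply hF
      have hASM : AEStronglyMeasurable (fun ω => Dfin ω * F ω) P := by
        apply h.aestronglyMeasurable.congr
        filter_upwards [hDeq] with ω h
        rw [h]
      have : AEStronglyMeasurable (fun ω => (Dfin ω)⁻¹ * (Dfin ω * F ω)) P :=
        (hDfinmeas.inv.aestronglyMeasurable).mul hASM
      apply this.congr
      filter_upwards [hDfin_ne] with ω h
      field_simp
    have h2 : ¬ Integrable (fun ω => c₂ ω * F ω) P := by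
      intro h
      apply hF
      have : AEStronglyMeasurable (fun ω => (c₂ ω)⁻¹ * (c₂ ω * F ω)) P :=
        (hc₂meas.inv.aestronglyMeasurable).mul h.aestronglyMeasurable
      apply this.congr
      filter_upwards with ω
      have : c₂ ω ≠ 0 := (Real.exp_pos _).ne'
      field_simp
    rw [integral_undef h1, integral_undef h2]
    have hP : (0:ℝ) ≤ (P E).toReal := ENNReal.toReal_nonneg
    refine ⟨?_, by simpa using hM0, by simpa using hM0⟩
    simp only [sub_zero, abs_zero]
    have : (0:ℝ) ≤ r * δ := mul_nonneg hr hδ.le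
    rw [hEdef] at hP ⊢
    nlinarith
end PerTau

section Final

lemma abs_sSup_sub_sSup_le {α : Type*} {S : Set α} (hS : S.Nonempty) {h g : α → ℝ}
    {C B : ℝ} (hdiff : ∀ a ∈ S, |h a - g a| ≤ C)
    (hh : ∀ a ∈ S, |h a| ≤ B) (hg : ∀ a ∈ S, |g a| ≤ B) :
    |sSup (h '' S) - sSup (g '' S)| ≤ C := by
  have hbddh : BddAbove (h '' S) := by
    refine ⟨B, ?_⟩
    rintro y ⟨a, ha, rfl⟩
    exact (abs_le.mp (hh a ha)).2
  have hbddg : BddAbove (g '' S) := by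
    refine ⟨B, ?_⟩
    rintro y ⟨a, ha, rfl⟩
    exact (abs_le.mp (hg a ha)).2
  rw [abs_le]
  constructor
  · have : ∀ y ∈ g '' S, y ≤ sSup (h '' S) + C := by
      rintro y ⟨a, ha, rfl⟩
      have h1 : g a ≤ h a + C := by
        have := (abs_le.mp (hdiff a ha)).1
        linarith
      have h2 : h a ≤ sSup (h '' S) := le_csSup hbddh ⟨a, ha, rfl⟩
      linarith
    have := csSup_le (hS.image g) this
    linarith
  · have : ∀ y ∈ h '' S, y ≤ sSup (g '' S) + C := by
      rintro y ⟨a, ha, rfl⟩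
      have h1 : h a ≤ g a + C := by
        have := (abs_le.mp (hdiff a ha)).2
        linarith
      have h2 : g a ≤ sSup (g '' S) := le_csSup hbddg ⟨a, ha, rfl⟩
      linarith
    have := csSup_le (hS.image h) this
    linarith

end Final

/-- for `T ∈ [0,∞)` and naturals `k(n)` with `k(n)/n → T`, for every `x`:
`|V̂^{(n)}_{k(n)}(x) − V^{(n)}_{k(n)}(x)| → 0` as `n → ∞`. -/
theorem statement6 {Ω : Type*} [MeasurableSpace Ω] (P : Measure Ω) [IsProbabilityMeasure P]
    (X : ℝ → Ω → ℝ) (hX : IsLevy P X)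
    (f : ℝ → ℝ) (hf : Continuous f) (hfb : ∃ M : ℝ, ∀ x, |f x| ≤ M)
    (r : ℝ) (hr : 0 ≤ r)
    (ξ : ℕ → ℕ → Ω → ℝ)
    (hξ : ∀ n : ℕ, 1 ≤ n → IsExpSeq P (n : ℝ) (ξ n))
    (hind : ∀ n : ℕ, 1 ≤ n → IndepOfProcess P (ξ n) X)
    (T : ℝ) (hT : 0 ≤ T) (k : ℕ → ℕ)
    (hk : Tendsto (fun n : ℕ => (k n : ℝ) / n) atTop (nhds T)) :
    ∀ x : ℝ,
      Tendsto (fun n : ℕ => |Vhat P X (ξ n) f r (k n) x - V P X (ξ n) f r n (k n) x|)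
        atTop (nhds 0) := by
  obtain ⟨M, hM⟩ := hfb
  have hM0 : 0 ≤ M := le_trans (abs_nonneg _) (hM 0)
  intro x
  rw [NormedAddCommGroup.tendsto_nhds_zero]
  intro ε hε
  set δ : ℝ := ε / (2 * (M * r + 1)) with hδdef
  have hδ : 0 < δ := by positivity
  have hprob := prob_tendsto P ξ hξ T hT k hk δ hδ
  have hc : (0:ℝ) < ε / (4 * (M + 1)) := by positivity
  have hev : ∀ᶠ n : ℕ in atTop, (P (⋃ i ∈ Finset.range (k n + 1),
      {ω | δ < |gridTime (ξ n) i ω - (i : ℝ) / (n : ℝ)|})).toReal < ε / (4 * (M + 1)) :=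
    hprob.eventually_lt_const hc
  filter_upwards [hev, eventually_ge_atTop 1] with n hPn hn1
  set Pn : ℝ := (P (⋃ i ∈ Finset.range (k n + 1),
      {ω | δ < |gridTime (ξ n) i ω - (i : ℝ) / (n : ℝ)|})).toReal with hPndef
  have hPn0 : 0 ≤ Pn := ENNReal.toReal_nonneg
  -- the main bound
  have hSne : (gridStoppingTimes X (ξ n)).Nonempty :=
    ⟨fun _ => (0:ℝ), zero_mem_gridStoppingTimes X (ξ n)⟩
  have hmain : |Vhat P X (ξ n) f r (k n) x - V P X (ξ n) f r n (k n) x|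
      ≤ M * (r * δ + 2 * Pn) := by
    unfold Vhat V
    apply abs_sSup_sub_sSup_le (B := M) hSne
    · intro τ hτ
      have := per_tau_bound hX.1 hn1 (hξ n hn1) f hM hr x (k n) hδ hτ
      rw [abs_sub_comm]
      exact this.1
    · intro τ hτ
      exact (per_tau_bound hX.1 hn1 (hξ n hn1) f hM hr x (k n) hδ hτ).2.2
    · intro τ hτ
      exact (per_tau_bound hX.1 hn1 (hξ n hn1) f hM hr x (k n) hδ hτ).2.1
  rw [Real.norm_eq_abs, abs_abs]
  refine lt_of_le_of_lt hmain ?_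
  have hMr1 : (0:ℝ) < M * r + 1 := by positivity
  have h1 : M * (r * δ) ≤ ε / 2 := by
    rw [hδdef]
    calc M * (r * (ε / (2 * (M * r + 1)))) = (M * r / (M * r + 1)) * (ε / 2) := by
          field_simp
      _ ≤ 1 * (ε / 2) := by
          apply mul_le_mul_of_nonneg_right _ (by positivity)
          rw [div_le_one hMr1]
          linarith
      _ = ε / 2 := one_mul _
  have h2 : M * (2 * Pn) < ε / 2 := by
    have hstep : M * (2 * Pn) ≤ (M + 1) * (2 * Pn) := by nlinarith
    have h4 : 2 * Pn < 2 * (ε / (4 * (M + 1))) := by linarith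
    have h3 : (M + 1) * (2 * Pn) < (M + 1) * (2 * (ε / (4 * (M + 1)))) :=
      mul_lt_mul_of_pos_left h4 (by positivity)
    have h5 : (M + 1) * (2 * (ε / (4 * (M + 1)))) = ε / 2 := by
      field_simp
      ring
    linarith
  calc M * (r * δ + 2 * Pn) = M * (r * δ) + M * (2 * Pn) := by ring
    _ < ε / 2 + ε / 2 := by linarith
    _ = ε := by ring
end ProbLemma
end

section
/- For every k ≥ 1: V_k(x) = max(K − e^x, 0) for all x ≤ x̄_k, and V_k(x) = e^{−r/n} E[ V_{k−1}(x + Y) ] for all x > x̄_k. -/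
open MeasureTheory

open MeasureTheory

/-- The recursively defined value functions for the Canadised American put:
`V_0(x) = (K − e^x)⁺` and `V_k(x) = max{(K − e^x)⁺, e^{−r/n} E[V_{k−1}(x + Y)]}`. -/
noncomputable def putV {Ω : Type*} [MeasurableSpace Ω] (P : Measure Ω) (Y : Ω → ℝ)
    (K r : ℝ) (n : ℕ) : ℕ → ℝ → ℝ
  | 0 => fun x => max (K - Real.exp x) 0
  | k + 1 => fun x =>
      max (max (K - Real.exp x) 0)
        (Real.exp (-(r / n)) * ∫ ω, putV P Y K r n k (x + Y ω) ∂P)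

section aux

variable {Ω : Type*} [MeasurableSpace Ω] (P : Measure Ω) [IsProbabilityMeasure P]
  (Y : Ω → ℝ) (K r : ℝ) (n : ℕ)

lemma putV_nonneg (k : ℕ) (x : ℝ) : 0 ≤ putV P Y K r n k x := by
  cases k with
  | zero => exact le_max_right _ _
  | succ m => exact le_trans (le_max_right (K - Real.exp x) 0) (le_max_left _ _)

lemma putV_cont_le (hK : 0 < K) (hr : 0 < r) (hY : Measurable Y) (k : ℕ) :
    Continuous (putV P Y K r n k) ∧ ∀ x, putV P Y K r n k x ≤ K := by
  induction k with
  | zero =>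
    refine ⟨(continuous_const.sub Real.continuous_exp).max continuous_const, fun x => ?_⟩
    exact max_le (by linarith [Real.exp_pos x]) hK.le
  | succ m ih =>
    obtain ⟨hc, hle⟩ := ih
    have hmeas : ∀ x : ℝ, AEStronglyMeasurable (fun ω => putV P Y K r n m (x + Y ω)) P :=
      fun x => (hc.measurable.comp (measurable_const.add hY)).aestronglyMeasurable
    have hbd : ∀ x : ℝ, ∀ ω, ‖putV P Y K r n m (x + Y ω)‖ ≤ K := by
      intro x ω
      rw [Real.norm_eq_abs, abs_of_nonneg (putV_nonneg P Y K r n m _)]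
      exact hle _
    have hint : ∀ x : ℝ, Integrable (fun ω => putV P Y K r n m (x + Y ω)) P := fun x =>
      (integrable_const K).mono' (hmeas x) (Filter.Eventually.of_forall (hbd x))
    have hexp : Real.exp (-(r / n)) ≤ 1 :=
      Real.exp_le_one_iff.mpr (neg_nonpos.mpr (div_nonneg hr.le (Nat.cast_nonneg n)))
    constructor
    · refine ((continuous_const.sub Real.continuous_exp).max continuous_const).max
        (continuous_const.mul ?_)
      exact continuous_of_dominated hmeas
        (fun x => Filter.Eventually.of_forall (hbd x)) (integrable_const K)
        (Filter.Eventually.of_forall fun ω => hc.comp (continuous_id.add continuous_const))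
    · intro x
      refine max_le (max_le (by linarith [Real.exp_pos x]) hK.le) ?_
      have h1 : ∫ ω, putV P Y K r n m (x + Y ω) ∂P ≤ ∫ _, K ∂P :=
        integral_mono (hint x) (integrable_const K) (fun ω => hle _)
      have h2 : (∫ _, K ∂P : ℝ) = K := by simp
      have h3 : 0 ≤ ∫ ω, putV P Y K r n m (x + Y ω) ∂P :=
        integral_nonneg fun ω => putV_nonneg P Y K r n m _
      calc Real.exp (-(r / n)) * ∫ ω, putV P Y K r n m (x + Y ω) ∂P
          ≤ 1 * K := mul_le_mul hexp (h1.trans h2.le) h3 one_pos.le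
        _ = K := one_mul K

lemma putV_integrable (hK : 0 < K) (hr : 0 < r) (hY : Measurable Y) (k : ℕ) (x : ℝ) :
    Integrable (fun ω => putV P Y K r n k (x + Y ω)) P := by
  obtain ⟨hc, hle⟩ := putV_cont_le P Y K r n hK hr hY k
  refine (integrable_const K).mono'
    ((hc.measurable.comp (measurable_const.add hY)).aestronglyMeasurable)
    (Filter.Eventually.of_forall fun ω => ?_)
  rw [Real.norm_eq_abs, abs_of_nonneg (putV_nonneg P Y K r n k _)]
  exact hle _

lemma putV_integral_le (hK : 0 < K) (hr : 0 < r) (hY : Measurable Y) (k : ℕ) (x : ℝ) :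
    ∫ ω, putV P Y K r n k (x + Y ω) ∂P ≤ K := by
  have h1 : ∫ ω, putV P Y K r n k (x + Y ω) ∂P ≤ ∫ _, K ∂P :=
    integral_mono (putV_integrable P Y K r n hK hr hY k x) (integrable_const K)
      (fun ω => (putV_cont_le P Y K r n hK hr hY k).2 _)
  simpa using h1

/-- Convexity of the integral term, given convexity of `s ↦ V_k (log s)`. -/
lemma integral_convexOn (hK : 0 < K) (hr : 0 < r) (hY : Measurable Y) (k : ℕ)
    (ih : ConvexOn ℝ (Set.Ioi 0) fun s => putV P Y K r n k (Real.log s)) :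
    ConvexOn ℝ (Set.Ioi 0)
      fun s => ∫ ω, putV P Y K r n k (Real.log s + Y ω) ∂P := by
  refine ⟨convex_Ioi 0, ?_⟩
  intro x hx y hy a b ha hb hab
  have hx0 : (0:ℝ) < x := hx
  have hy0 : (0:ℝ) < y := hy
  have hz : a • x + b • y ∈ Set.Ioi (0:ℝ) := (convex_Ioi 0) hx hy ha hb hab
  have hz0 : (0:ℝ) < a * x + b * y := by simpa [smul_eq_mul] using hz
  have hpt : ∀ ω, putV P Y K r n k (Real.log (a • x + b • y) + Y ω)
      ≤ a * putV P Y K r n k (Real.log x + Y ω)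
        + b * putV P Y K r n k (Real.log y + Y ω) := by
    intro ω
    have hx' : x * Real.exp (Y ω) ∈ Set.Ioi (0:ℝ) := mul_pos hx0 (Real.exp_pos _)
    have hy' : y * Real.exp (Y ω) ∈ Set.Ioi (0:ℝ) := mul_pos hy0 (Real.exp_pos _)
    have h := ih.2 hx' hy' ha hb hab
    simp only [smul_eq_mul] at h ⊢
    have hcomb : a * (x * Real.exp (Y ω)) + b * (y * Real.exp (Y ω))
        = (a * x + b * y) * Real.exp (Y ω) := by ring
    rw [hcomb, Real.log_mul (ne_of_gt hz0) (Real.exp_ne_zero _), Real.log_exp,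
      Real.log_mul (ne_of_gt hx0) (Real.exp_ne_zero _), Real.log_exp,
      Real.log_mul (ne_of_gt hy0) (Real.exp_ne_zero _), Real.log_exp] at h
    exact h
  have hIx := putV_integrable P Y K r n hK hr hY k (Real.log x)
  have hIy := putV_integrable P Y K r n hK hr hY k (Real.log y)
  have hIz := putV_integrable P Y K r n hK hr hY k (Real.log (a • x + b • y))
  have h1 : ∫ ω, putV P Y K r n k (Real.log (a • x + b • y) + Y ω) ∂P
      ≤ ∫ ω, (a * putV P Y K r n k (Real.log x + Y ω)
          + b * putV P Y K r n k (Real.log y + Y ω)) ∂P :=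
    integral_mono hIz ((hIx.const_mul a).add (hIy.const_mul b)) hpt
  rw [integral_add (hIx.const_mul a) (hIy.const_mul b),
    integral_const_mul, integral_const_mul] at h1
  simpa [smul_eq_mul] using h1

lemma putV_convexOn (hK : 0 < K) (hr : 0 < r) (hY : Measurable Y) (k : ℕ) :
    ConvexOn ℝ (Set.Ioi 0) fun s => putV P Y K r n k (Real.log s) := by
  induction k with
  | zero =>
    refine ⟨convex_Ioi 0, ?_⟩
    intro x hx y hy a b ha hb hab
    have hx0 : (0:ℝ) < x := hx
    have hy0 : (0:ℝ) < y := hy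
    have hz : a • x + b • y ∈ Set.Ioi (0:ℝ) := (convex_Ioi 0) hx hy ha hb hab
    have hz0 : (0:ℝ) < a * x + b * y := by simpa [smul_eq_mul] using hz
    simp only [putV, smul_eq_mul, Real.exp_log hx0, Real.exp_log hy0, Real.exp_log hz0]
    refine max_le ?_ ?_
    · have h1 : a * (K - x) ≤ a * max (K - x) 0 :=
        mul_le_mul_of_nonneg_left (le_max_left _ _) ha
      have h2 : b * (K - y) ≤ b * max (K - y) 0 :=
        mul_le_mul_of_nonneg_left (le_max_left _ _) hb
      nlinarith
    · exact add_nonneg (mul_nonneg ha (le_max_right _ _)) (mul_nonneg hb (le_max_right _ _))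
  | succ m ih =>
    have hJ := integral_convexOn P Y K r n hK hr hY m ih
    refine ⟨convex_Ioi 0, ?_⟩
    intro x hx y hy a b ha hb hab
    have hx0 : (0:ℝ) < x := hx
    have hy0 : (0:ℝ) < y := hy
    have hz : a • x + b • y ∈ Set.Ioi (0:ℝ) := (convex_Ioi 0) hx hy ha hb hab
    have hz0 : (0:ℝ) < a * x + b * y := by simpa [smul_eq_mul] using hz
    have hc0 : (0:ℝ) ≤ Real.exp (-(r / n)) := (Real.exp_pos _).le
    simp only [putV, smul_eq_mul, Real.exp_log hx0, Real.exp_log hy0, Real.exp_log hz0]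
    refine max_le (max_le ?_ ?_) ?_
    · -- K - (a x + b y) ≤ a * V(x) + b * V(y)
      have h1 : K - x ≤ max (max (K - x) 0)
          (Real.exp (-(r / n)) * ∫ ω, putV P Y K r n m (Real.log x + Y ω) ∂P) :=
        le_trans (le_max_left _ _) (le_max_left _ _)
      have h2 : K - y ≤ max (max (K - y) 0)
          (Real.exp (-(r / n)) * ∫ ω, putV P Y K r n m (Real.log y + Y ω) ∂P) :=
        le_trans (le_max_left _ _) (le_max_left _ _)
      nlinarith [mul_le_mul_of_nonneg_left h1 ha, mul_le_mul_of_nonneg_left h2 hb]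
    · have h1 : (0:ℝ) ≤ max (max (K - x) 0)
          (Real.exp (-(r / n)) * ∫ ω, putV P Y K r n m (Real.log x + Y ω) ∂P) :=
        le_trans (le_max_right _ _) (le_max_left _ _)
      have h2 : (0:ℝ) ≤ max (max (K - y) 0)
          (Real.exp (-(r / n)) * ∫ ω, putV P Y K r n m (Real.log y + Y ω) ∂P) :=
        le_trans (le_max_right _ _) (le_max_left _ _)
      nlinarith
    · have hconv := hJ.2 hx hy ha hb hab
      simp only [smul_eq_mul] at hconv
      have h1 : Real.exp (-(r / n)) * ∫ ω, putV P Y K r n m (Real.log x + Y ω) ∂P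
          ≤ max (max (K - x) 0)
            (Real.exp (-(r / n)) * ∫ ω, putV P Y K r n m (Real.log x + Y ω) ∂P) :=
        le_max_right _ _
      have h2 : Real.exp (-(r / n)) * ∫ ω, putV P Y K r n m (Real.log y + Y ω) ∂P
          ≤ max (max (K - y) 0)
            (Real.exp (-(r / n)) * ∫ ω, putV P Y K r n m (Real.log y + Y ω) ∂P) :=
        le_max_right _ _
      nlinarith [mul_le_mul_of_nonneg_left hconv hc0]

end aux

/-- with `(x̄_k)` the strictly decreasing sequence with `x̄_0 = log K` whose
terms solve the boundary equations, for every `k ≥ 1`: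
`V_k(x) = (K − e^x)⁺` for `x ≤ x̄_k`, and `V_k(x) = e^{−r/n} E[V_{k−1}(x + Y)]` for
`x > x̄_k`. -/
theorem statement15 {Ω : Type*} [MeasurableSpace Ω] (P : Measure Ω) [IsProbabilityMeasure P]
    (K r : ℝ) (hK : 0 < K) (hr : 0 < r) (n : ℕ) (hn : 1 ≤ n)
    (Y : Ω → ℝ) (hY : Measurable Y)
    (hYneg : ∀ y : ℝ, 0 < P {ω | Y ω < y})
    (xb : ℕ → ℝ) (hanti : StrictAnti xb) (hxb0 : xb 0 = Real.log K)
    (hsol : ∀ k : ℕ,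
      Real.exp (-(r / n)) * ∫ ω, putV P Y K r n k (xb (k + 1) + Y ω) ∂P
        = K - Real.exp (xb (k + 1)))
    (huniq : ∀ k : ℕ, ∀ z : ℝ, z < xb k →
      (Real.exp (-(r / n)) * ∫ ω, putV P Y K r n k (z + Y ω) ∂P = K - Real.exp z) →
      z = xb (k + 1)) :
    ∀ k : ℕ, ∀ x : ℝ,
      (x ≤ xb (k + 1) → putV P Y K r n (k + 1) x = max (K - Real.exp x) 0) ∧
        (xb (k + 1) < x →
          putV P Y K r n (k + 1) x
            = Real.exp (-(r / n)) * ∫ ω, putV P Y K r n k (x + Y ω) ∂P) := by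
  intro k x
  set c : ℝ := Real.exp (-(r / n)) with hc
  have hn0 : (0:ℝ) < (n:ℝ) := by exact_mod_cast Nat.lt_of_lt_of_le Nat.zero_lt_one hn
  have hc0 : 0 < c := Real.exp_pos _
  have hc1 : c < 1 := Real.exp_lt_one_iff.mpr (by positivity |> neg_neg_iff_pos.mpr)
  -- the convex integral function
  set J : ℝ → ℝ := fun s => ∫ ω, putV P Y K r n k (Real.log s + Y ω) ∂P with hJdef
  have hJconv : ConvexOn ℝ (Set.Ioi 0) J :=
    integral_convexOn P Y K r n hK hr hY k (putV_convexOn P Y K r n hK hr hY k)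
  have hJle : ∀ s : ℝ, J s ≤ K := fun s => putV_integral_le P Y K r n hK hr hY k _
  have hJ0 : ∀ s : ℝ, 0 ≤ J s := fun s =>
    integral_nonneg fun ω => putV_nonneg P Y K r n k _
  set sb : ℝ := Real.exp (xb (k + 1)) with hsb
  have hsbpos : 0 < sb := Real.exp_pos _
  have hsolJ : c * J sb = K - sb := by
    have := hsol k
    simpa [hJdef, hsb, Real.log_exp] using this
  set s0 : ℝ := min (sb / 2) (K * (1 - c) / 2) with hs0
  have hs0pos : 0 < s0 := lt_min (by linarith) (by nlinarith)
  have hs0lt : s0 < sb := lt_of_le_of_lt (min_le_left _ _) (by linarith)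
  have hφ0 : c * J s0 < K - s0 := by
    have h1 : c * J s0 ≤ c * K := mul_le_mul_of_nonneg_left (hJle s0) hc0.le
    have h2 : s0 ≤ K * (1 - c) / 2 := min_le_right _ _
    nlinarith
  -- Claim A : for 0 < s ≤ sb, c * J s ≤ K - s
  have claimA : ∀ s : ℝ, 0 < s → s ≤ sb → c * J s ≤ K - s := by
    intro s hs hssb
    rcases le_or_gt s s0 with h | h
    · have h1 : c * J s ≤ c * K := mul_le_mul_of_nonneg_left (hJle s) hc0.le
      have h2 : s0 ≤ K * (1 - c) / 2 := min_le_right _ _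
      nlinarith
    · rcases eq_or_lt_of_le hssb with rfl | hlt
      · linarith [hsolJ]
      · set a : ℝ := (sb - s) / (sb - s0) with ha
        set b : ℝ := (s - s0) / (sb - s0) with hb
        have hd : 0 < sb - s0 := by linarith
        have ha0 : 0 ≤ a := div_nonneg (by linarith) hd.le
        have hb0 : 0 ≤ b := div_nonneg (by linarith) hd.le
        have hab : a + b = 1 := by
          rw [ha, hb, ← add_div, div_eq_one_iff_eq hd.ne']; ring
        have hcomb : a • s0 + b • sb = s := by
          simp only [smul_eq_mul, ha, hb]; field_simp; ring
        have hconv := hJconv.2 (Set.mem_Ioi.mpr hs0pos) (Set.mem_Ioi.mpr hsbpos) ha0 hb0 hab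
        rw [hcomb] at hconv
        simp only [smul_eq_mul] at hconv
        have hm : c * J s ≤ c * (a * J s0 + b * J sb) :=
          mul_le_mul_of_nonneg_left hconv hc0.le
        have h1 : a * (c * J s0) ≤ a * (K - s0) :=
          mul_le_mul_of_nonneg_left hφ0.le ha0
        have hcomb' : a * s0 + b * sb = s := by
          have := hcomb; simpa [smul_eq_mul] using this
        nlinarith
  -- Claim B : for sb < s, K - s ≤ c * J s
  have claimB : ∀ s : ℝ, sb < s → K - s ≤ c * J s := by
    intro s hlt
    have hs : 0 < s := hsbpos.trans hlt
    set a : ℝ := (s - sb) / (s - s0) with ha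
    set b : ℝ := (sb - s0) / (s - s0) with hb
    have hd : 0 < s - s0 := by linarith
    have ha0 : 0 ≤ a := div_nonneg (by linarith) hd.le
    have hb0 : 0 < b := div_pos (by linarith) hd
    have hab : a + b = 1 := by
      rw [ha, hb, ← add_div, div_eq_one_iff_eq hd.ne']; ring
    have hcomb : a • s0 + b • s = sb := by
      simp only [smul_eq_mul, ha, hb]; field_simp; ring
    have hconv := hJconv.2 (Set.mem_Ioi.mpr hs0pos) (Set.mem_Ioi.mpr hs) ha0 hb0.le hab
    rw [hcomb] at hconv
    simp only [smul_eq_mul] at hconv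
    have hm : c * J sb ≤ c * (a * J s0 + b * J s) :=
      mul_le_mul_of_nonneg_left hconv hc0.le
    have h1 : a * (c * J s0) ≤ a * (K - s0) :=
      mul_le_mul_of_nonneg_left hφ0.le ha0
    have hcomb' : a * s0 + b * s = sb := by
      have := hcomb; simpa [smul_eq_mul] using this
    have hgoal : b * (K - s) ≤ b * (c * J s) := by nlinarith
    exact le_of_mul_le_mul_left (by linarith) hb0
  have hJx : ∀ x' : ℝ, J (Real.exp x') = ∫ ω, putV P Y K r n k (x' + Y ω) ∂P := by
    intro x'; simp [hJdef, Real.log_exp]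
  constructor
  · intro hx
    have hxK : Real.exp x < K := by
      have h1 : xb (k + 1) < xb 0 := hanti (Nat.succ_pos k)
      have h2 : x < Real.log K := by rw [← hxb0]; exact lt_of_le_of_lt hx h1
      calc Real.exp x < Real.exp (Real.log K) := Real.exp_lt_exp.mpr h2
        _ = K := Real.exp_log hK
    have hA := claimA (Real.exp x) (Real.exp_pos x) (Real.exp_le_exp.mpr hx)
    rw [hJx x] at hA
    show max (max (K - Real.exp x) 0) (c * ∫ ω, putV P Y K r n k (x + Y ω) ∂P)
        = max (K - Real.exp x) 0
    exact max_eq_left (hA.trans (le_max_left _ _))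
  · intro hx
    have hB := claimB (Real.exp x) (Real.exp_lt_exp.mpr hx)
    rw [hJx x] at hB
    have hnn : 0 ≤ c * ∫ ω, putV P Y K r n k (x + Y ω) ∂P :=
      mul_nonneg hc0.le (integral_nonneg fun ω => putV_nonneg P Y K r n k _)
    show max (max (K - Real.exp x) 0) (c * ∫ ω, putV P Y K r n k (x + Y ω) ∂P)
        = c * ∫ ω, putV P Y K r n k (x + Y ω) ∂P
    exact max_eq_right (max_le hB hnn)
end

section
/- The map s ↦ E[ max(K − s e^Y, 0) ] is convex on (0, ∞); moreover F(s) → (c − 1)K < 0 as s ↓ 0, F(K) > 0, and F has exactly one zero in the interval (0, K]. -/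
open MeasureTheory Filter

/-- let `K > 0`, `c ∈ (0,1)` and let `Y` be a random variable with
`ℙ(Y < 0) > 0`; set `F(s) = c·E[max(K − s e^Y, 0)] − max(K − s, 0)` for `s > 0`.
Then `s ↦ E[max(K − s e^Y, 0)]` is convex on `(0,∞)`; moreover `F(s) → (c−1)K < 0`
as `s ↓ 0`, `F(K) > 0`, and `F` has exactly one zero in `(0, K]`. -/
theorem statement17 {Ω : Type*} [MeasurableSpace Ω] (P : Measure Ω) [IsProbabilityMeasure P]
    (K c : ℝ) (hK : 0 < K) (hc : c ∈ Set.Ioo (0 : ℝ) 1)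
    (Y : Ω → ℝ) (hY : Measurable Y) (hYneg : 0 < P {ω | Y ω < 0})
    (F : ℝ → ℝ)
    (hF : ∀ s : ℝ, F s
      = c * (∫ ω, max (K - s * Real.exp (Y ω)) 0 ∂P) - max (K - s) 0) :
    ConvexOn ℝ (Set.Ioi 0) (fun s => ∫ ω, max (K - s * Real.exp (Y ω)) 0 ∂P) ∧
      Tendsto F (nhdsWithin 0 (Set.Ioi 0)) (nhds ((c - 1) * K)) ∧
      (c - 1) * K < 0 ∧
      0 < F K ∧
      ∃! s : ℝ, s ∈ Set.Ioc 0 K ∧ F s = 0 := by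
  obtain ⟨hc0, hc1⟩ := hc
  set g : ℝ → ℝ := fun s => ∫ ω, max (K - s * Real.exp (Y ω)) 0 ∂P with hgdef
  have hmeas : ∀ s : ℝ, AEStronglyMeasurable (fun ω => max (K - s * Real.exp (Y ω)) 0) P :=
    fun s => ((measurable_const.sub ((hY.exp).const_mul s)).max measurable_const).aestronglyMeasurable
  have hbound : ∀ s : ℝ, 0 ≤ s → ∀ ω, ‖max (K - s * Real.exp (Y ω)) 0‖ ≤ K := by
    intro s hs ω
    rw [Real.norm_eq_abs, abs_of_nonneg (le_max_right _ _)]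
    refine max_le ?_ hK.le
    nlinarith [Real.exp_pos (Y ω)]
  have hint : ∀ s : ℝ, 0 ≤ s → Integrable (fun ω => max (K - s * Real.exp (Y ω)) 0) P :=
    fun s hs => (integrable_const K).mono' (hmeas s) (Eventually.of_forall (hbound s hs))
  -- convexity of g
  have hconv : ConvexOn ℝ (Set.Ioi 0) g := by
    refine ⟨convex_Ioi 0, fun x hx y hy a b ha hb hab => ?_⟩
    simp only [smul_eq_mul]
    have hx0 : (0:ℝ) < x := hx
    have hy0 : (0:ℝ) < y := hy
    have hxy0 : (0:ℝ) ≤ a * x + b * y := by nlinarith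
    have hptwise : ∀ ω, max (K - (a * x + b * y) * Real.exp (Y ω)) 0
        ≤ a * max (K - x * Real.exp (Y ω)) 0 + b * max (K - y * Real.exp (Y ω)) 0 := by
      intro ω
      have ha1 : 0 ≤ a * max (K - x * Real.exp (Y ω)) 0 := by positivity
      have hb1 : 0 ≤ b * max (K - y * Real.exp (Y ω)) 0 := by positivity
      refine max_le ?_ (by linarith)
      have heq : K - (a * x + b * y) * Real.exp (Y ω)
          = a * (K - x * Real.exp (Y ω)) + b * (K - y * Real.exp (Y ω)) := by
        linear_combination (-K) * hab
      rw [heq]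
      exact add_le_add (mul_le_mul_of_nonneg_left (le_max_left _ _) ha)
        (mul_le_mul_of_nonneg_left (le_max_left _ _) hb)
    have hcalc : g (a * x + b * y)
        ≤ ∫ ω, (a * max (K - x * Real.exp (Y ω)) 0 + b * max (K - y * Real.exp (Y ω)) 0) ∂P := by
      exact integral_mono (hint _ hxy0) (((hint x hx0.le).const_mul a).add ((hint y hy0.le).const_mul b)) hptwise
    calc g (a * x + b * y)
        ≤ ∫ ω, (a * max (K - x * Real.exp (Y ω)) 0 + b * max (K - y * Real.exp (Y ω)) 0) ∂P := hcalc
      _ = a * g x + b * g y := by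
          rw [integral_add ((hint x hx0.le).const_mul a) ((hint y hy0.le).const_mul b),
            integral_const_mul, integral_const_mul]
  -- limit of g at 0+
  have hg0 : Tendsto g (nhdsWithin 0 (Set.Ioi 0)) (nhds K) := by
    have h : Tendsto (fun s => ∫ ω, max (K - s * Real.exp (Y ω)) 0 ∂P)
        (nhdsWithin 0 (Set.Ioi 0)) (nhds (∫ _ω, (K:ℝ) ∂P)) := by
      refine tendsto_integral_filter_of_dominated_convergence (fun _ => K)
        (Eventually.of_forall hmeas) ?_ (integrable_const K) ?_
      · filter_upwards [self_mem_nhdsWithin] with s hs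
        exact Eventually.of_forall (hbound s (le_of_lt hs))
      · refine Eventually.of_forall (fun ω => ?_)
        have hcont : Continuous fun s : ℝ => max (K - s * Real.exp (Y ω)) 0 :=
          (continuous_const.sub (continuous_id.mul continuous_const)).max continuous_const
        have h2 : Tendsto (fun s : ℝ => max (K - s * Real.exp (Y ω)) 0)
            (nhdsWithin 0 (Set.Ioi 0)) (nhds (max (K - 0 * Real.exp (Y ω)) 0)) :=
          (hcont.tendsto 0).mono_left nhdsWithin_le_nhds
        simpa [max_eq_left hK.le] using h2
    simpa using h
  -- limit of F at 0+
  have hmaxt : Tendsto (fun s : ℝ => max (K - s) 0) (nhdsWithin 0 (Set.Ioi 0)) (nhds K) := by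
    have hcont : Continuous fun s : ℝ => max (K - s) 0 :=
      (continuous_const.sub continuous_id).max continuous_const
    have h2 : Tendsto (fun s : ℝ => max (K - s) 0)
        (nhdsWithin 0 (Set.Ioi 0)) (nhds (max (K - 0) 0)) :=
      (hcont.tendsto 0).mono_left nhdsWithin_le_nhds
    simpa [max_eq_left hK.le] using h2
  have hFt : Tendsto F (nhdsWithin 0 (Set.Ioi 0)) (nhds ((c - 1) * K)) := by
    have h := (hg0.const_mul c).sub hmaxt
    have he : c * K - K = (c - 1) * K := by ring
    rw [he] at h
    exact h.congr (fun s => (hF s).symm)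
  have hneg : (c - 1) * K < 0 := mul_neg_of_neg_of_pos (by linarith) hK
  -- F K > 0
  have hFK : 0 < F K := by
    rw [hF K, sub_self, max_eq_right le_rfl, sub_zero]
    have hpos : 0 < ∫ ω, max (K - K * Real.exp (Y ω)) 0 ∂P := by
      rw [integral_pos_iff_support_of_nonneg (f := fun ω => max (K - K * Real.exp (Y ω)) 0)
        (fun ω => le_max_right _ _) (hint K hK.le)]
      refine lt_of_lt_of_le hYneg (measure_mono ?_)
      intro ω hω
      have h1 : Real.exp (Y ω) < 1 := Real.exp_lt_one_iff.mpr hω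
      have h2 : 0 < K - K * Real.exp (Y ω) := by nlinarith
      exact (lt_of_lt_of_le h2 (le_max_left _ _)).ne'
    exact mul_pos hc0 hpos
  -- continuity of F on (0,∞)
  have hgc : ContinuousOn g (Set.Ioi 0) := hconv.continuousOn isOpen_Ioi
  have hFcont : ContinuousOn F (Set.Ioi 0) := by
    have h : ContinuousOn (fun s => c * g s - max (K - s) 0) (Set.Ioi 0) :=
      (continuousOn_const.mul hgc).sub (Continuous.continuousOn ((continuous_const.sub continuous_id).max continuous_const))
    exact h.congr (fun s _ => hF s)
  -- F is negative somewhere below any positive t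
  have hev : ∀ t : ℝ, 0 < t → ∃ a, 0 < a ∧ a < t ∧ F a < 0 := by
    intro t ht
    have h1 : ∀ᶠ a in nhdsWithin 0 (Set.Ioi 0), F a < 0 := hFt.eventually_lt_const hneg
    have h2 : ∀ᶠ a in nhdsWithin 0 (Set.Ioi 0), a < t :=
      (eventually_lt_nhds ht).filter_mono nhdsWithin_le_nhds
    have h3 : ∀ᶠ a in nhdsWithin 0 (Set.Ioi 0), a ∈ Set.Ioi (0:ℝ) := eventually_mem_nhdsWithin
    obtain ⟨a, ⟨hFa, hat⟩, ha0⟩ := ((h1.and h2).and h3).exists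
    exact ⟨a, ha0, hat, hFa⟩
  -- convexity of F on (0, K]
  have hFconv : ConvexOn ℝ (Set.Ioc 0 K) F := by
    have hg' : ConvexOn ℝ (Set.Ioc 0 K) g := hconv.subset Set.Ioc_subset_Ioi_self (convex_Ioc 0 K)
    have h2 := hg'.smul hc0.le
    have h3 : ConvexOn ℝ (Set.Ioc 0 K) (fun s : ℝ => s - K) :=
      (convexOn_id (convex_Ioc 0 K)).sub (concaveOn_const K (convex_Ioc 0 K))
    have h1 : ConvexOn ℝ (Set.Ioc 0 K) (fun s => c * g s + (s - K)) := by
      exact h2.add h3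
    have hEq : ∀ z ∈ Set.Ioc 0 K, F z = c * g z + (z - K) := by
      intro z hz
      rw [hF z, max_eq_left (by linarith [hz.2])]
      ring
    refine ⟨convex_Ioc 0 K, fun x hx y hy a b ha hb hab => ?_⟩
    have hxy : a • x + b • y ∈ Set.Ioc 0 K := (convex_Ioc 0 K) hx hy ha hb hab
    rw [hEq _ hxy, hEq _ hx, hEq _ hy]
    exact h1.2 hx hy ha hb hab
  -- uniqueness of zeros
  have key : ∀ u v : ℝ, u ∈ Set.Ioc 0 K → v ∈ Set.Ioc 0 K → F u = 0 → F v = 0 → u < v → False := by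
    intro u v hu hv hFu hFv huv
    obtain ⟨a, ha0, hau, haF⟩ := hev u hu.1
    have hva : 0 < v - a := by linarith
    set lam := (v - u) / (v - a) with hlamdef
    set mu := (u - a) / (v - a) with hmudef
    have hlam : 0 < lam := div_pos (by linarith) hva
    have hmu : 0 < mu := div_pos (by linarith) hva
    have hsum : lam + mu = 1 := by
      rw [hlamdef, hmudef]
      field_simp
      ring
    have hcomb : lam * a + mu * v = u := by
      rw [hlamdef, hmudef]
      field_simp
      ring
    have haIoc : a ∈ Set.Ioc 0 K := ⟨ha0, by linarith [hu.2]⟩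
    have hle := hFconv.2 haIoc hv hlam.le hmu.le hsum
    simp only [smul_eq_mul] at hle
    rw [hcomb, hFu, hFv] at hle
    nlinarith
  have huniq : ∀ u v : ℝ, u ∈ Set.Ioc 0 K → v ∈ Set.Ioc 0 K → F u = 0 → F v = 0 → u = v := by
    intro u v hu hv hFu hFv
    rcases lt_trichotomy u v with h | h | h
    · exact (key u v hu hv hFu hFv h).elim
    · exact h
    · exact (key v u hv hu hFv hFu h).elim
  -- existence of a zero
  obtain ⟨a, ha0, haK, haF⟩ := hev K hK
  have hsub : Set.Icc a K ⊆ Set.Ioi 0 := fun x hx => lt_of_lt_of_le ha0 hx.1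
  obtain ⟨s, hs, hs0⟩ := intermediate_value_Icc haK.le (hFcont.mono hsub) ⟨haF.le, hFK.le⟩
  have hsIoc : s ∈ Set.Ioc 0 K := ⟨lt_of_lt_of_le ha0 hs.1, hs.2⟩
  exact ⟨hconv, hFt, hneg, hFK, ⟨s, ⟨hsIoc, hs0⟩, fun t ht => huniq t s ht.1 hsIoc ht.2 hs0⟩⟩
end
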